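/- In an abstract FTvN system (V, W, λ), if E ⊆ V is spectral (E = λ⁻¹(Q) for some Q ⊆ W), a ∈ E, and d belongs to the normal cone N_E(a), then ⟨a, d⟩ = ⟨λ(a), λ(d)⟩, i.e., a and d commute in the FTvN sense. -/

import Mathlib

theorem stmt15 {V W : Type*}
    [NormedAddCommGroup V] [InnerProductSpace ℝ V]
    [NormedAddCommGroup W] [InnerProductSpace ℝ W]
    (lam : V → W) (hnorm : ∀ x, ‖lam x‖ = ‖x‖)
    (hmax : ∀ c u : V,
      IsGreatest {r : ℝ | ∃ x : V, lam x = lam u ∧ r = inner ℝ c x}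
        (inner ℝ (lam c) (lam u)))
    (Q : Set W) (E : Set V) (hEQ : E = lam ⁻¹' Q)
    (a : V) (ha : a ∈ E) (d : V)
    (hd : ∀ x ∈ E, (inner ℝ d (x - a) : ℝ) ≤ 0) :
    (inner ℝ a d : ℝ) = inner ℝ (lam a) (lam d) := by
  obtain ⟨⟨x, hx, hxval⟩, hub⟩ := hmax d a
  have hxE : x ∈ E := by
    rw [hEQ] at ha ⊢
    simpa [Set.mem_preimage, hx] using ha
  have h1 : (inner ℝ (lam d) (lam a) : ℝ) ≤ inner ℝ d a := by
    have := hd x hxE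
    rw [inner_sub_right] at this
    linarith [hxval ▸ this]
  have h2 : (inner ℝ d a : ℝ) ≤ inner ℝ (lam d) (lam a) :=
    hub ⟨a, rfl, rfl⟩
  have key : (inner ℝ d a : ℝ) = inner ℝ (lam d) (lam a) := le_antisymm h2 h1
  calc (inner ℝ a d : ℝ) = inner ℝ d a := (real_inner_comm a d).symm
    _ = inner ℝ (lam d) (lam a) := key
    _ = inner ℝ (lam a) (lam d) := (real_inner_comm (lam d) (lam a)).symm
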